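/- Let d ≥ 5 and let α, β ∈ ℂ be nonzero, and set f = x₀^d + α·x₁^d + β·(x₀+x₁)^d ∈ ℂ[x₀,x₁]. Then the space of homogeneous cubics g ∈ ℂ[y₀,y₁] with g(∂₀,∂₁)f = 0 is exactly the one-dimensional span of the cubic y₀²y₁ − y₀y₁². -/

import Mathlib

open MvPolynomial

/-- The differential action of `g ∈ ℂ[y₀,…,y_{n-1}]` on `f ∈ ℂ[x₀,…,x_{n-1}]`:
`g(∂₀,…,∂_{n-1}) f`, obtained by substituting the partial derivative `∂/∂xᵢ` for `yᵢ`. -/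
noncomputable def diffOp {n : ℕ} (g f : MvPolynomial (Fin n) ℂ) : MvPolynomial (Fin n) ℂ :=
  g.support.sum fun m =>
    g.coeff m •
      ((List.ofFn fun i : Fin n =>
        ((MvPolynomial.pderiv i).toLinearMap ^ (m i) :
          Module.End ℂ (MvPolynomial (Fin n) ℂ))).prod f)

namespace Stmt15Aux

noncomputable def op (m : Fin 2 →₀ ℕ) (f : MvPolynomial (Fin 2) ℂ) : MvPolynomial (Fin 2) ℂ :=
  ((pderiv (0:Fin 2)).toLinearMap ^ (m 0)) (((pderiv (1:Fin 2)).toLinearMap ^ (m 1)) f)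

lemma diffOp_eq (g f : MvPolynomial (Fin 2) ℂ) :
    diffOp g f = (AddMonoidAlgebra.coeff g).sum fun m c => c • op m f := by
  unfold diffOp op Finsupp.sum
  apply Finset.sum_congr rfl
  intro m _
  rw [List.ofFn_succ, List.ofFn_succ, List.ofFn_zero, List.prod_cons, List.prod_cons,
    List.prod_nil, mul_one]
  simp [Module.End.mul_apply, MvPolynomial.coeff]

lemma diffOp_add (g₁ g₂ f : MvPolynomial (Fin 2) ℂ) :
    diffOp (g₁ + g₂) f = diffOp g₁ f + diffOp g₂ f := by
  rw [diffOp_eq, diffOp_eq, diffOp_eq, AddMonoidAlgebra.coeff_add]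
  exact Finsupp.sum_add_index' (fun m => zero_smul ℂ _) (fun m c₁ c₂ => add_smul _ _ _)

lemma diffOp_smul (c : ℂ) (g f : MvPolynomial (Fin 2) ℂ) :
    diffOp (c • g) f = c • diffOp g f := by
  rw [diffOp_eq, diffOp_eq, AddMonoidAlgebra.coeff_smul]
  rw [Finsupp.sum_smul_index' (h := fun m c => c • op m f) (fun m => zero_smul ℂ _)]
  rw [Finsupp.smul_sum]
  simp_rw [smul_assoc]

lemma diffOp_sub (g₁ g₂ f : MvPolynomial (Fin 2) ℂ) :
    diffOp (g₁ - g₂) f = diffOp g₁ f - diffOp g₂ f := by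
  have : g₁ - g₂ = g₁ + (-1 : ℂ) • g₂ := by
    rw [neg_one_smul]; ring
  rw [this, diffOp_add, diffOp_smul, neg_one_smul]
  ring

lemma diffOp_monomial (m : Fin 2 →₀ ℕ) (c : ℂ) (f : MvPolynomial (Fin 2) ℂ) :
    diffOp (monomial m c) f = c • op m f := by
  rw [diffOp_eq]
  exact sum_monomial_eq (by simp)

lemma pd0_X0 (n : ℕ) : pderiv (0:Fin 2) ((X 0 : MvPolynomial (Fin 2) ℂ) ^ n) = n • X 0 ^ (n-1) := by
  rw [Derivation.leibniz_pow]; simp [pderiv_X_self]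
lemma pd1_X0 (n : ℕ) : pderiv (1:Fin 2) ((X 0 : MvPolynomial (Fin 2) ℂ) ^ n) = 0 := by
  rw [Derivation.leibniz_pow]; simp [pderiv_X_of_ne]
lemma pd0_X1 (n : ℕ) : pderiv (0:Fin 2) ((X 1 : MvPolynomial (Fin 2) ℂ) ^ n) = 0 := by
  rw [Derivation.leibniz_pow]; simp [pderiv_X_of_ne]
lemma pd1_X1 (n : ℕ) : pderiv (1:Fin 2) ((X 1 : MvPolynomial (Fin 2) ℂ) ^ n) = n • X 1 ^ (n-1) := by
  rw [Derivation.leibniz_pow]; simp [pderiv_X_self]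
lemma pd_S (i : Fin 2) (n : ℕ) :
    pderiv i (((X 0 + X 1) : MvPolynomial (Fin 2) ℂ) ^ n) = n • (X 0 + X 1) ^ (n-1) := by
  rw [Derivation.leibniz_pow]; fin_cases i <;> simp [pderiv_X_self, pderiv_X_of_ne]

variable (d : ℕ) (α β : ℂ)

lemma op30 :
    op (Finsupp.single 0 3) (X 0 ^ d + C α * X 1 ^ d + C β * (X 0 + X 1) ^ d) =
     (d*(d-1)*(d-2)) • (X 0 ^ (d-3) + C β * (X 0 + X 1) ^ (d-3)) := by
  unfold op
  rw [show (Finsupp.single (0:Fin 2) 3) 1 = 0 by simp,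
      show (Finsupp.single (0:Fin 2) 3) 0 = 3 by simp]
  simp only [pow_zero, Module.End.one_apply, Module.End.pow_apply,
    Function.iterate_succ, Function.iterate_zero, Function.comp_apply, id_eq]
  simp only [Derivation.coeFn_coe, map_add, pd0_X0, pd0_X1, pd1_X0, pd1_X1, pd_S, map_nsmul,
    Derivation.leibniz, pderiv_C, smul_eq_mul, mul_zero, zero_mul, zero_add, add_zero,
    smul_zero, zero_smul, map_smul, smul_smul, smul_add, Nat.sub_sub,
    Derivation.map_smul_of_tower]
  norm_num [mul_smul_comm]
  ring

lemma op21 :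
    op (Finsupp.single 0 2 + Finsupp.single 1 1) (X 0 ^ d + C α * X 1 ^ d + C β * (X 0 + X 1) ^ d) =
     (d*(d-1)*(d-2)) • (C β * (X 0 + X 1) ^ (d-3)) := by
  unfold op
  rw [show ((Finsupp.single (0:Fin 2) 2 + Finsupp.single 1 1 : Fin 2 →₀ ℕ)) 1 = 1 by simp,
      show ((Finsupp.single (0:Fin 2) 2 + Finsupp.single 1 1 : Fin 2 →₀ ℕ)) 0 = 2 by simp]
  simp only [pow_zero, Module.End.one_apply, Module.End.pow_apply,
    Function.iterate_succ, Function.iterate_zero, Function.comp_apply, id_eq]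
  simp only [Derivation.coeFn_coe, map_add, pd0_X0, pd0_X1, pd1_X0, pd1_X1, pd_S, map_nsmul,
    Derivation.leibniz, pderiv_C, smul_eq_mul, mul_zero, zero_mul, zero_add, add_zero,
    smul_zero, zero_smul, map_smul, smul_smul, smul_add, Nat.sub_sub,
    Derivation.map_smul_of_tower]
  norm_num [mul_smul_comm]
  ring_nf
  try rfl

lemma op12 :
    op (Finsupp.single 0 1 + Finsupp.single 1 2) (X 0 ^ d + C α * X 1 ^ d + C β * (X 0 + X 1) ^ d) =
     (d*(d-1)*(d-2)) • (C β * (X 0 + X 1) ^ (d-3)) := by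
  unfold op
  rw [show ((Finsupp.single (0:Fin 2) 1 + Finsupp.single 1 2 : Fin 2 →₀ ℕ)) 1 = 2 by simp,
      show ((Finsupp.single (0:Fin 2) 1 + Finsupp.single 1 2 : Fin 2 →₀ ℕ)) 0 = 1 by simp]
  simp only [pow_zero, Module.End.one_apply, Module.End.pow_apply,
    Function.iterate_succ, Function.iterate_zero, Function.comp_apply, id_eq]
  simp only [Derivation.coeFn_coe, map_add, pd0_X0, pd0_X1, pd1_X0, pd1_X1, pd_S, map_nsmul,
    Derivation.leibniz, pderiv_C, smul_eq_mul, mul_zero, zero_mul, zero_add, add_zero,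
    smul_zero, zero_smul, map_smul, smul_smul, smul_add, Nat.sub_sub,
    Derivation.map_smul_of_tower]
  norm_num [mul_smul_comm]
  ring_nf
  try rfl

lemma op03 :
    op (Finsupp.single 1 3) (X 0 ^ d + C α * X 1 ^ d + C β * (X 0 + X 1) ^ d) =
     (d*(d-1)*(d-2)) • (C α * X 1 ^ (d-3) + C β * (X 0 + X 1) ^ (d-3)) := by
  unfold op
  rw [show (Finsupp.single (1:Fin 2) 3) 1 = 3 by simp,
      show (Finsupp.single (1:Fin 2) 3) 0 = 0 by simp]
  simp only [pow_zero, Module.End.one_apply, Module.End.pow_apply,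
    Function.iterate_succ, Function.iterate_zero, Function.comp_apply, id_eq]
  simp only [Derivation.coeFn_coe, map_add, pd0_X0, pd0_X1, pd1_X0, pd1_X1, pd_S, map_nsmul,
    Derivation.leibniz, pderiv_C, smul_eq_mul, mul_zero, zero_mul, zero_add, add_zero,
    smul_zero, zero_smul, map_smul, smul_smul, smul_add, Nat.sub_sub,
    Derivation.map_smul_of_tower]
  norm_num [mul_smul_comm]
  ring_nf
  try rfl

lemma fin2_finsupp_eq (m : Fin 2 →₀ ℕ) :
    m = Finsupp.single 0 (m 0) + Finsupp.single 1 (m 1) := by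
  ext i
  fin_cases i <;> simp [Finsupp.single_apply]

lemma classify (m : Fin 2 →₀ ℕ) (h : m 0 + m 1 = 3) :
    m = Finsupp.single 0 3 ∨ m = Finsupp.single 0 2 + Finsupp.single 1 1 ∨
    m = Finsupp.single 0 1 + Finsupp.single 1 2 ∨ m = Finsupp.single 1 3 := by
  have h0 : m 0 ≤ 3 := by omega
  have hm := fin2_finsupp_eq m
  interval_cases h1 : (m 0) <;>
    · have h2 : m 1 = 3 - m 0 := by omega
      rw [h1] at h2
      norm_num at h2
      rw [h2] at hm
      norm_num at hm ⊢
      simp [hm]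

lemma repr3 (g : MvPolynomial (Fin 2) ℂ) (hg : g.IsHomogeneous 3) :
    g = monomial (Finsupp.single 0 3) (coeff (Finsupp.single 0 3) g)
      + monomial (Finsupp.single 0 2 + Finsupp.single 1 1)
          (coeff (Finsupp.single 0 2 + Finsupp.single 1 1) g)
      + monomial (Finsupp.single 0 1 + Finsupp.single 1 2)
          (coeff (Finsupp.single 0 1 + Finsupp.single 1 2) g)
      + monomial (Finsupp.single 1 3) (coeff (Finsupp.single 1 3) g) := by
  have hne1 : (Finsupp.single (0:Fin 2) 3) ≠ Finsupp.single 0 2 + Finsupp.single 1 1 := by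
    intro h; have := DFunLike.congr_fun h 0; simp [Finsupp.single_apply] at this
  have hne2 : (Finsupp.single (0:Fin 2) 3) ≠ Finsupp.single 0 1 + Finsupp.single 1 2 := by
    intro h; have := DFunLike.congr_fun h 0; simp [Finsupp.single_apply] at this
  have hne3 : (Finsupp.single (0:Fin 2) 3) ≠ Finsupp.single 1 3 := by
    intro h; have := DFunLike.congr_fun h 0; simp [Finsupp.single_apply] at this
  have hne4 : (Finsupp.single (0:Fin 2) 2 + Finsupp.single 1 1 : Fin 2 →₀ ℕ)
      ≠ Finsupp.single 0 1 + Finsupp.single 1 2 := by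
    intro h; have := DFunLike.congr_fun h 0; simp [Finsupp.single_apply] at this
  have hne5 : (Finsupp.single (0:Fin 2) 2 + Finsupp.single 1 1 : Fin 2 →₀ ℕ)
      ≠ Finsupp.single 1 3 := by
    intro h; have := DFunLike.congr_fun h 0; simp [Finsupp.single_apply] at this
  have hne6 : (Finsupp.single (0:Fin 2) 1 + Finsupp.single 1 2 : Fin 2 →₀ ℕ)
      ≠ Finsupp.single 1 3 := by
    intro h; have := DFunLike.congr_fun h 0; simp [Finsupp.single_apply] at this
  have hsub : g.support ⊆ ({Finsupp.single 0 3, Finsupp.single 0 2 + Finsupp.single 1 1,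
      Finsupp.single 0 1 + Finsupp.single 1 2, Finsupp.single 1 3} : Finset (Fin 2 →₀ ℕ)) := by
    intro m hm
    have hc : coeff m g ≠ 0 := mem_support_iff.mp hm
    have hdeg := hg hc
    rw [Finsupp.weight_apply] at hdeg
    have h3 : m 0 + m 1 = 3 := by
      rw [Finsupp.sum_fintype _ _ (fun i => by simp), Fin.sum_univ_two] at hdeg
      simpa using hdeg
    simp only [Finset.mem_insert, Finset.mem_singleton]
    exact classify m h3
  calc g = ∑ v ∈ g.support, monomial v (coeff v g) := as_sum g
    _ = ∑ v ∈ ({Finsupp.single 0 3, Finsupp.single 0 2 + Finsupp.single 1 1,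
      Finsupp.single 0 1 + Finsupp.single 1 2, Finsupp.single 1 3} : Finset (Fin 2 →₀ ℕ)),
        monomial v (coeff v g) := by
      refine Finset.sum_subset hsub fun m _ hm => ?_
      rw [notMem_support_iff.mp hm, map_zero]
    _ = _ := by
      rw [Finset.sum_insert (by simp [hne1, hne2, hne3]),
        Finset.sum_insert (by simp [hne4, hne5]),
        Finset.sum_insert (by simp [hne6]), Finset.sum_singleton]
      ring

lemma v_eq : (X 0 ^ 2 * X 1 - X 0 * X 1 ^ 2 : MvPolynomial (Fin 2) ℂ) =
    monomial (Finsupp.single 0 2 + Finsupp.single 1 1) 1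
      - monomial (Finsupp.single 0 1 + Finsupp.single 1 2) 1 := by
  have hX0 : (X 0 : MvPolynomial (Fin 2) ℂ) = monomial (Finsupp.single 0 1) 1 := rfl
  have hX1 : (X 1 : MvPolynomial (Fin 2) ℂ) = monomial (Finsupp.single 1 1) 1 := rfl
  rw [show (X 0 ^ 2 * X 1 : MvPolynomial (Fin 2) ℂ)
      = monomial (Finsupp.single 0 2) 1 * monomial (Finsupp.single 1 1) 1 by
        rw [X_pow_eq_monomial, hX1],
    show (X 0 * X 1 ^ 2 : MvPolynomial (Fin 2) ℂ)
      = monomial (Finsupp.single 0 1) 1 * monomial (Finsupp.single 1 2) 1 by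
        rw [X_pow_eq_monomial, hX0],
    monomial_mul, monomial_mul, one_mul]

end Stmt15Aux

open Stmt15Aux in
theorem stmt_15 (d : ℕ) (hd : 5 ≤ d) (α β : ℂ) (hα : α ≠ 0) (hβ : β ≠ 0)
    (f : MvPolynomial (Fin 2) ℂ)
    (hf : f = X 0 ^ d + C α * X 1 ^ d + C β * (X 0 + X 1) ^ d) :
    {g : MvPolynomial (Fin 2) ℂ | g.IsHomogeneous 3 ∧ diffOp g f = 0} =
      ↑(Submodule.span ℂ
        ({X 0 ^ 2 * X 1 - X 0 * X 1 ^ 2} : Set (MvPolynomial (Fin 2) ℂ))) := by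
  have hn0 : d - 3 ≠ 0 := by omega
  have hNpos : 0 < d*(d-1)*(d-2) := Nat.mul_pos (Nat.mul_pos (by omega) (by omega)) (by omega)
  have hN : ((d*(d-1)*(d-2) : ℕ) : ℂ) ≠ 0 := Nat.cast_ne_zero.mpr hNpos.ne'
  have h2n : ((2:ℂ))^(d-3) ≠ 2 := by
    intro h
    have h' : ((2^(d-3) : ℕ) : ℂ) = ((2 : ℕ) : ℂ) := by push_cast; exact h
    have h4 : 4 ≤ 2^(d-3) := by
      calc (4:ℕ) = 2^2 := rfl
      _ ≤ 2^(d-3) := Nat.pow_le_pow_right (by norm_num) (by omega)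
    have := Nat.cast_inj.mp h'
    omega
  have hdiff : ∀ g : MvPolynomial (Fin 2) ℂ, g.IsHomogeneous 3 → diffOp g f =
      coeff (Finsupp.single 0 3) g • op (Finsupp.single 0 3) f
      + coeff (Finsupp.single 0 2 + Finsupp.single 1 1) g •
          op (Finsupp.single 0 2 + Finsupp.single 1 1) f
      + coeff (Finsupp.single 0 1 + Finsupp.single 1 2) g •
          op (Finsupp.single 0 1 + Finsupp.single 1 2) f
      + coeff (Finsupp.single 1 3) g • op (Finsupp.single 1 3) f := by
    intro g hg
    conv_lhs => rw [repr3 g hg]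
    rw [diffOp_add, diffOp_add, diffOp_add, diffOp_monomial, diffOp_monomial,
      diffOp_monomial, diffOp_monomial]
  have heval : ∀ (a b c e x y : ℂ),
      eval ![x,y] (a • ((d*(d-1)*(d-2) : ℕ) • ((X 0 : MvPolynomial (Fin 2) ℂ)^(d-3)
          + C β * (X 0 + X 1)^(d-3)))
        + b • ((d*(d-1)*(d-2):ℕ) • ((C β : MvPolynomial (Fin 2) ℂ) * (X 0 + X 1)^(d-3)))
        + c • ((d*(d-1)*(d-2):ℕ) • ((C β : MvPolynomial (Fin 2) ℂ) * (X 0 + X 1)^(d-3)))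
        + e • ((d*(d-1)*(d-2):ℕ) • ((C α : MvPolynomial (Fin 2) ℂ) * X 1^(d-3)
          + C β * (X 0 + X 1)^(d-3))))
      = ((d*(d-1)*(d-2):ℕ) : ℂ) * (a * (x^(d-3) + β*(x+y)^(d-3)) + b*(β*(x+y)^(d-3))
          + c*(β*(x+y)^(d-3)) + e*(α*y^(d-3) + β*(x+y)^(d-3))) := by
    intro a b c e x y
    simp only [map_add, smul_eval, nsmul_eq_mul, map_mul, map_pow, eval_X, eval_C,
      map_natCast, Matrix.cons_val_zero, Matrix.cons_val_one, Matrix.head_cons]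
    ring
  ext g
  simp only [Set.mem_setOf_eq, SetLike.mem_coe, Submodule.mem_span_singleton]
  constructor
  · rintro ⟨hg, hzero⟩
    set a := coeff (Finsupp.single 0 3) g with ha_def
    set b := coeff (Finsupp.single 0 2 + Finsupp.single 1 1) g with hb_def
    set c := coeff (Finsupp.single 0 1 + Finsupp.single 1 2) g with hc_def
    set e := coeff (Finsupp.single 1 3) g with he_def
    have H : a • op (Finsupp.single 0 3) f
        + b • op (Finsupp.single 0 2 + Finsupp.single 1 1) f
        + c • op (Finsupp.single 0 1 + Finsupp.single 1 2) f
        + e • op (Finsupp.single 1 3) f = 0 := by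
      rw [← hdiff g hg]; exact hzero
    rw [hf, op30 d α β, op21 d α β, op12 d α β, op03 d α β] at H
    have E1 := congrArg (eval ![1,0]) H
    rw [heval, map_zero] at E1
    have E2 := congrArg (eval ![0,1]) H
    rw [heval, map_zero] at E2
    have E3 := congrArg (eval ![1,1]) H
    rw [heval, map_zero] at E3
    rw [show ((1:ℂ)+0) = 1 by ring, one_pow, zero_pow hn0] at E1
    rw [show ((0:ℂ)+1) = 1 by ring, one_pow, zero_pow hn0] at E2
    rw [show ((1:ℂ)+1) = 2 by ring, one_pow] at E3
    have e1 : a * (1 + β) + b*β + c*β + e*(α*0 + β) = 0 :=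
      (mul_eq_zero.mp (by linear_combination E1)).resolve_left hN
    have e2 : a * (0 + β) + b*β + c*β + e*(α + β) = 0 :=
      (mul_eq_zero.mp (by linear_combination E2)).resolve_left hN
    have e3 : a * (1 + β*(2:ℂ)^(d-3)) + b*(β*(2:ℂ)^(d-3)) + c*(β*(2:ℂ)^(d-3))
        + e*(α + β*(2:ℂ)^(d-3)) = 0 :=
      (mul_eq_zero.mp (by linear_combination E3)).resolve_left hN
    have ht : (β*(a+b+c+e)) * ((2:ℂ)^(d-3) - 2) = 0 := by linear_combination e3 - e1 - e2
    have ht0 : a+b+c+e = 0 := by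
      rcases mul_eq_zero.mp ht with h | h
      · exact (mul_eq_zero.mp h).resolve_left hβ
      · exact absurd (by linear_combination h) h2n
    have ha : a = 0 := by linear_combination e1 - β * ht0
    have heα : e * α = 0 := by linear_combination e2 - β * ht0
    have he : e = 0 := (mul_eq_zero.mp heα).resolve_right hα
    have hcb : c = -b := by linear_combination ht0 - ha - he
    refine ⟨b, ?_⟩
    rw [v_eq, smul_sub, smul_monomial, smul_monomial, smul_eq_mul, mul_one]
    conv_rhs => rw [repr3 g hg]
    rw [← ha_def, ← hb_def, ← hc_def, ← he_def, ha, he, hcb]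
    simp only [monomial_zero, map_neg, zero_add, add_zero]
    abel
  · rintro ⟨k, hk⟩
    have hv : (X 0 ^ 2 * X 1 - X 0 * X 1 ^ 2 : MvPolynomial (Fin 2) ℂ).IsHomogeneous 3 := by
      have h1 := ((isHomogeneous_X ℂ (0 : Fin 2)).pow 2).mul (isHomogeneous_X ℂ 1)
      have h2 := (isHomogeneous_X ℂ (0 : Fin 2)).mul ((isHomogeneous_X ℂ (1 : Fin 2)).pow 2)
      norm_num at h1 h2
      exact h1.sub h2
    rw [← hk]
    constructor
    · exact (mem_homogeneousSubmodule _ _).mp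
        (Submodule.smul_mem _ k ((mem_homogeneousSubmodule _ _).mpr hv))
    · rw [diffOp_smul, v_eq, diffOp_sub, diffOp_monomial, diffOp_monomial, one_smul,
        one_smul, hf, op21 d α β, op12 d α β, sub_self, smul_zero]
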